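/- arXiv:2401.15765 — 3 statements merged into one kernel-verified Lean document; each statement's English description precedes it below -/
import Mathlib

section
/- Let $B_0 = \mathrm{diag}(\lambda_{0,1},\dots,\lambda_{0,n})$ and $B = \mathrm{diag}(\lambda_1,\dots,\lambda_m)$ be real diagonal matrices with $\lambda_{0,i} \neq \lambda_j$ for all $i,j$, and let $F^{\dagger}$ be an $n\times m$ real matrix. Define $U_{i,j} = 1/(\lambda_{0,i} - \lambda_j)^2$ and let $F^{\ddagger} = U * (F^{\dagger} B^{T} - B_0 F^{\dagger})$, where $*$ denotes the entrywise (Hadamard) matrix product. Then $F^{\ddagger}_{i,j} = F^{\dagger}_{i,j}/(\lambda_j - \lambda_{0,i})$ for all $i,j$, and $F^{\ddagger}$ satisfies the Sylvester relation $F^{\ddagger} B - B_0 F^{\ddagger} = F^{\dagger}$. -/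
open Matrix

/-- For diagonal `B₀ = diag(λ₀)`, `B = diag(λ)` with `λ₀ᵢ ≠ λⱼ` for all `i, j`,
`Uᵢⱼ = 1/(λ₀ᵢ - λⱼ)²` and `F‡ = U ∗ (F† Bᵀ - B₀ F†)` (Hadamard product), one has
`F‡ᵢⱼ = F†ᵢⱼ/(λⱼ - λ₀ᵢ)` and the Sylvester relation `F‡ B - B₀ F‡ = F†`. -/
theorem hadamard_formula_solves_sylvester {n m : ℕ}
    (lam₀ : Fin n → ℝ) (lam : Fin m → ℝ)
    (hdist : ∀ i j, lam₀ i ≠ lam j)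
    (Fdag : Matrix (Fin n) (Fin m) ℝ)
    (U : Matrix (Fin n) (Fin m) ℝ)
    (hU : ∀ i j, U i j = 1 / (lam₀ i - lam j) ^ 2)
    (Fddag : Matrix (Fin n) (Fin m) ℝ)
    (hFddag : Fddag =
      Matrix.hadamard U (Fdag * (Matrix.diagonal lam)ᵀ - Matrix.diagonal lam₀ * Fdag)) :
    (∀ i j, Fddag i j = Fdag i j / (lam j - lam₀ i)) ∧
      Fddag * Matrix.diagonal lam - Matrix.diagonal lam₀ * Fddag = Fdag := by
  have key : ∀ i j, Fddag i j = Fdag i j / (lam j - lam₀ i) := by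
    intro i j
    have hne : lam₀ i - lam j ≠ 0 := sub_ne_zero.mpr (hdist i j)
    have hne' : lam j - lam₀ i ≠ 0 := fun h => hne (by linarith [sub_eq_zero.mp h])
    rw [hFddag]
    simp only [hadamard_apply, Matrix.sub_apply, diagonal_transpose, mul_diagonal, diagonal_mul,
      hU i j]
    field_simp
    ring
  refine ⟨key, ?_⟩
  ext i j
  have hne : lam j - lam₀ i ≠ 0 :=
    fun h => hdist i j (by linarith [sub_eq_zero.mp h])
  simp only [Matrix.sub_apply, mul_diagonal, diagonal_mul, key i j]
  field_simp
end

section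
/- Let $B_0 = \mathrm{diag}(\lambda_{0,1},\dots,\lambda_{0,n})$ and $B = \mathrm{diag}(\lambda_1,\dots,\lambda_n)$ be real diagonal $n\times n$ matrices with $B_0$ invertible and $\lambda_{0,i} \neq \lambda_j$ for all $i,j$. Let $P_0, P, F_n$ be $n\times n$ real matrices with $P_0$ invertible, let $\beta, c \in \mathbb{R}^n$, and define the source $Q(\xi) = F_n \left( P\, \exp(\xi B)\, \beta + c \right)$, $F^{\dagger} = P_0^{-1} F_n P$, $F_c = P_0^{-1} F_n$, and $F^{\ddagger}_{i,j} = F^{\dagger}_{i,j}/(\lambda_j - \lambda_{0,i})$. Then for all $x_0, x \in \mathbb{R}$, $\int_{x_0}^{x} \exp(-\xi B_0)\, P_0^{-1}\, Q(\xi)\, d\xi = \exp(-x B_0)\, F^{\ddagger}\, \exp(x B)\, \beta - \exp(-x_0 B_0)\, F^{\ddagger}\, \exp(x_0 B)\, \beta - B_0^{-1}\left( \exp(-x B_0) - \exp(-x_0 B_0) \right) F_c\, c$. -/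
open NormedSpace

set_option maxHeartbeats 1000000

lemma my_int_exp_mul (cc : ℝ) (hc : cc ≠ 0) (a b : ℝ) :
    ∫ ξ in a..b, Real.exp (cc * ξ) = (Real.exp (cc * b) - Real.exp (cc * a)) / cc := by
  rw [intervalIntegral.integral_comp_mul_left Real.exp hc, integral_exp]
  rw [smul_eq_mul]
  field_simp

lemma my_exp_smul_diag {n : ℕ} (v : Fin n → ℝ) (t : ℝ) :
    exp (t • Matrix.diagonal v) = Matrix.diagonal (fun i => Real.exp (t * v i)) := by
  rw [← Matrix.diagonal_smul, Matrix.exp_diagonal]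
  ext i j
  by_cases h : i = j <;>
    simp [Matrix.diagonal_apply, h, Real.exp_eq_exp_ℝ, Pi.smul_apply, smul_eq_mul]

/-- Closed-form evaluation of the source integral: for diagonal `B₀ = diag(λ₀)`
(invertible) and `B = diag(λ)` with `λ₀ᵢ ≠ λⱼ`, `P₀` invertible,
source `Q(ξ) = Fₙ (P exp(ξ B) β + c)`, `F† = P₀⁻¹ Fₙ P`, `F_c = P₀⁻¹ Fₙ`,
`F‡ᵢⱼ = F†ᵢⱼ/(λⱼ - λ₀ᵢ)`, one has
`∫_{x₀}^{x} exp(-ξ B₀) P₀⁻¹ Q(ξ) dξ = exp(-x B₀) F‡ exp(x B) β - exp(-x₀ B₀) F‡ exp(x₀ B) β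
  - B₀⁻¹ (exp(-x B₀) - exp(-x₀ B₀)) F_c c`. -/
theorem source_integral_closed_form {n : ℕ}
    (lam₀ lam : Fin n → ℝ)
    (B₀ B : Matrix (Fin n) (Fin n) ℝ)
    (hB₀ : B₀ = Matrix.diagonal lam₀) (hB : B = Matrix.diagonal lam)
    (hB₀inv : IsUnit B₀.det)
    (hdist : ∀ i j, lam₀ i ≠ lam j)
    (P₀ P Fn : Matrix (Fin n) (Fin n) ℝ) (hP₀ : IsUnit P₀.det)
    (β c : Fin n → ℝ)
    (Q : ℝ → Fin n → ℝ)
    (hQ : ∀ ξ : ℝ, Q ξ = Fn.mulVec (P.mulVec ((exp (ξ • B)).mulVec β) + c))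
    (Fdag Fc Fddag : Matrix (Fin n) (Fin n) ℝ)
    (hFdag : Fdag = P₀⁻¹ * Fn * P)
    (hFc : Fc = P₀⁻¹ * Fn)
    (hFddag : ∀ i j, Fddag i j = Fdag i j / (lam j - lam₀ i)) :
    ∀ x₀ x : ℝ,
      (∫ ξ in x₀..x, (exp ((-ξ) • B₀)).mulVec (P₀⁻¹.mulVec (Q ξ)))
        = (exp ((-x) • B₀) * Fddag * exp (x • B)).mulVec β
          - (exp ((-x₀) • B₀) * Fddag * exp (x₀ • B)).mulVec β
          - (B₀⁻¹ * (exp ((-x) • B₀) - exp ((-x₀) • B₀)) * Fc).mulVec c := by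
  intro x₀ x
  -- nonzero eigenvalues of B₀
  have hlam₀ : ∀ i, lam₀ i ≠ 0 := by
    intro i
    rw [hB₀, Matrix.det_diagonal, isUnit_iff_ne_zero, Finset.prod_ne_zero_iff] at hB₀inv
    exact hB₀inv i (Finset.mem_univ i)
  have hsub : ∀ i j, lam j - lam₀ i ≠ 0 := fun i j => sub_ne_zero.mpr fun h => hdist i j h.symm
  -- rewrite the integrand in explicit entrywise form
  set g : ℝ → Fin n → ℝ := fun ξ i =>
    (∑ j, Fdag i j * β j * Real.exp ((lam j - lam₀ i) * ξ))
      + (Fc.mulVec c i) * Real.exp ((-lam₀ i) * ξ) with hg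
  have key : ∀ ξ : ℝ, (exp ((-ξ) • B₀)).mulVec (P₀⁻¹.mulVec (Q ξ)) = g ξ := by
    intro ξ
    have hv : P₀⁻¹.mulVec (Q ξ)
        = Fdag.mulVec ((Matrix.diagonal fun j => Real.exp (ξ * lam j)).mulVec β)
          + Fc.mulVec c := by
      rw [hQ, hB, my_exp_smul_diag, hFdag, hFc]
      simp only [Matrix.mulVec_add, Matrix.mulVec_mulVec, Matrix.mul_assoc]
    funext i
    rw [hv, hB₀, my_exp_smul_diag, Matrix.mulVec_diagonal]
    simp only [Pi.add_apply, hg, mul_add]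
    congr 1
    · rw [Matrix.mulVec, dotProduct]
      simp only [Matrix.mulVec_diagonal]
      rw [Finset.mul_sum]
      refine Finset.sum_congr rfl fun j _ => ?_
      rw [sub_mul, Real.exp_sub, div_eq_mul_inv, ← Real.exp_neg]
      ring_nf
    · ring_nf
  simp_rw [key]
  -- continuity and integrability
  have hcont : ∀ i, Continuous (fun ξ => g ξ i) := by
    intro i
    apply Continuous.add
    · exact continuous_finset_sum _ fun j _ => by fun_prop
    · fun_prop
  have hgint : IntervalIntegrable g MeasureTheory.volume x₀ x :=
    (continuous_pi hcont).intervalIntegrable x₀ x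
  funext i
  -- pass evaluation through the integral
  have heval : (∫ ξ in x₀..x, g ξ) i = ∫ ξ in x₀..x, g ξ i := by
    have := (ContinuousLinearMap.proj (R := ℝ) (φ := fun _ : Fin n => ℝ) i
      ).intervalIntegral_comp_comm hgint
    simpa using this.symm
  -- compute the scalar integral
  have hsumint : ∀ j : Fin n, IntervalIntegrable
      (fun ξ => Fdag i j * β j * Real.exp ((lam j - lam₀ i) * ξ))
      MeasureTheory.volume x₀ x := by
    intro j
    apply Continuous.intervalIntegrable
    fun_prop
  have h1 : IntervalIntegrable (fun ξ => ∑ j, Fdag i j * β j * Real.exp ((lam j - lam₀ i) * ξ))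
      MeasureTheory.volume x₀ x := by
    apply Continuous.intervalIntegrable
    exact continuous_finset_sum _ fun j _ => by fun_prop
  have h2 : IntervalIntegrable (fun ξ => (Fc.mulVec c i) * Real.exp ((-lam₀ i) * ξ))
      MeasureTheory.volume x₀ x := by
    apply Continuous.intervalIntegrable
    fun_prop
  have hLHS : (∫ ξ in x₀..x, g ξ) i
      = (∑ j, Fdag i j * β j *
          ((Real.exp ((lam j - lam₀ i) * x) - Real.exp ((lam j - lam₀ i) * x₀)) / (lam j - lam₀ i)))
        + (Fc.mulVec c i) *
          ((Real.exp ((-lam₀ i) * x) - Real.exp ((-lam₀ i) * x₀)) / (-lam₀ i)) := by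
    rw [heval]
    simp only [hg]
    rw [intervalIntegral.integral_add h1 h2,
      intervalIntegral.integral_finset_sum
        (f := fun j ξ => Fdag i j * β j * Real.exp ((lam j - lam₀ i) * ξ))
        (fun j _ => hsumint j)]
    congr 1
    · refine Finset.sum_congr rfl fun j _ => ?_
      rw [intervalIntegral.integral_const_mul, my_int_exp_mul _ (hsub i j)]
    · rw [intervalIntegral.integral_const_mul, my_int_exp_mul _ (neg_ne_zero.mpr (hlam₀ i))]
  rw [hLHS]
  -- compute the RHS entrywise
  have hterm : ∀ t : ℝ, (exp ((-t) • B₀) * Fddag * exp (t • B)).mulVec β i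
      = ∑ j, Real.exp ((-t) * lam₀ i) * Fddag i j * Real.exp (t * lam j) * β j := by
    intro t
    rw [hB, hB₀, my_exp_smul_diag, my_exp_smul_diag, Matrix.mulVec, dotProduct]
    refine Finset.sum_congr rfl fun j _ => ?_
    rw [Matrix.mul_diagonal, Matrix.diagonal_mul]
  have hterm3 : (B₀⁻¹ * (exp ((-x) • B₀) - exp ((-x₀) • B₀)) * Fc).mulVec c i
      = (lam₀ i)⁻¹ * (Real.exp ((-x) * lam₀ i) - Real.exp ((-x₀) * lam₀ i)) * (Fc.mulVec c i) := by
    have hinv : (Matrix.diagonal lam₀)⁻¹ = Matrix.diagonal (fun i => (lam₀ i)⁻¹) := by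
      apply Matrix.inv_eq_left_inv
      rw [Matrix.diagonal_mul_diagonal]
      convert Matrix.diagonal_one using 2
      funext k
      exact inv_mul_cancel₀ (hlam₀ k)
    rw [hB₀, my_exp_smul_diag, my_exp_smul_diag, hinv, Matrix.diagonal_sub,
      Matrix.diagonal_mul_diagonal, ← Matrix.mulVec_mulVec, Matrix.mulVec_diagonal]
  rw [Pi.sub_apply, Pi.sub_apply, hterm, hterm, hterm3]
  -- final scalar algebra
  rw [← Finset.sum_sub_distrib, sub_eq_add_neg]
  congr 1
  · refine Finset.sum_congr rfl fun j _ => ?_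
    rw [hFddag]
    have e1 : Real.exp ((lam j - lam₀ i) * x)
        = Real.exp ((-x) * lam₀ i) * Real.exp (x * lam j) := by
      rw [← Real.exp_add]; congr 1; ring
    have e2 : Real.exp ((lam j - lam₀ i) * x₀)
        = Real.exp ((-x₀) * lam₀ i) * Real.exp (x₀ * lam j) := by
      rw [← Real.exp_add]; congr 1; ring
    rw [e1, e2]
    have hij := hsub i j
    field_simp
  · have e3 : Real.exp ((-lam₀ i) * x) = Real.exp ((-x) * lam₀ i) := by congr 1; ring
    have e4 : Real.exp ((-lam₀ i) * x₀) = Real.exp ((-x₀) * lam₀ i) := by congr 1; ring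
    rw [e3, e4, div_eq_mul_inv, ← neg_inv]
    ring
end

section
/- Let $B_0 = \mathrm{diag}(\lambda_{0,1},\dots,\lambda_{0,n})$ and $B = \mathrm{diag}(\lambda_1,\dots,\lambda_n)$ be real diagonal $n\times n$ matrices, both invertible, with $\lambda_{0,i} \neq \lambda_j$ for all $i,j$. Let $P_0, P, F_n$ be $n\times n$ real matrices with $P_0$ invertible, let $\alpha, \beta, c \in \mathbb{R}^n$, define $Q(\xi) = F_n \left( P\, \exp(\xi B)\, \beta + c \right)$, $F^{\dagger} = P_0^{-1} F_n P$, $F_c = P_0^{-1} F_n$, $F^{\ddagger}_{i,j} = F^{\dagger}_{i,j}/(\lambda_j - \lambda_{0,i})$, and $\Psi(x) = P_0\, \exp(x B_0) \left( \alpha + \int_{x_L}^{x} \exp(-\xi B_0)\, P_0^{-1}\, Q(\xi)\, d\xi \right)$. Then for all $x_L \le x_R$, $\int_{x_L}^{x_R} \Psi(x)\, dx = P_0 B_0^{-1} \left( \exp(x_R B_0) - \exp(x_L B_0) \right) \left[ \alpha - \exp(-x_L B_0) F^{\ddagger} \exp(x_L B) \beta + B_0^{-1} \exp(-x_L B_0)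 F_c c \right] + P_0 F^{\ddagger} B^{-1} \left( \exp(x_R B) - \exp(x_L B) \right) \beta - P_0 B_0^{-1} F_c\, c\, (x_R - x_L)$. -/
open NormedSpace

lemma exp_smul_diagonal {n : ℕ} (v : Fin n → ℝ) (x : ℝ) :
    exp (x • Matrix.diagonal v) = Matrix.diagonal (fun i => Real.exp (x * v i)) := by
  rw [← Matrix.diagonal_smul, Matrix.exp_diagonal]
  funext i
  rw [Pi.exp_def, Real.exp_eq_exp_ℝ]
  simp

lemma inv_diagonal' {n : ℕ} (v : Fin n → ℝ) (hv : ∀ i, v i ≠ 0) :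
    (Matrix.diagonal v)⁻¹ = Matrix.diagonal (fun i => (v i)⁻¹) := by
  apply Matrix.inv_eq_right_inv
  rw [Matrix.diagonal_mul_diagonal]
  have : (fun i => v i * (v i)⁻¹) = fun _ => (1 : ℝ) := by
    funext i; exact mul_inv_cancel₀ (hv i)
  rw [this, Matrix.diagonal_one]

/-- Closed-form spatial integral of the angular flux over `[x_L, x_R]` (Eq. 23):
with diagonal invertible `B₀ = diag(λ₀)`, `B = diag(λ)`, `λ₀ᵢ ≠ λⱼ`, `P₀` invertible,
source `Q(ξ) = Fₙ (P exp(ξ B) β + c)`, `F† = P₀⁻¹ Fₙ P`, `F_c = P₀⁻¹ Fₙ`,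
`F‡ᵢⱼ = F†ᵢⱼ/(λⱼ - λ₀ᵢ)`, and
`Ψ(x) = P₀ exp(x B₀) (α + ∫_{x_L}^{x} exp(-ξ B₀) P₀⁻¹ Q(ξ) dξ)`, for all `x_L ≤ x_R`:
`∫_{x_L}^{x_R} Ψ(x) dx
  = P₀ B₀⁻¹ (exp(x_R B₀) - exp(x_L B₀))
      [α - exp(-x_L B₀) F‡ exp(x_L B) β + B₀⁻¹ exp(-x_L B₀) F_c c]
    + P₀ F‡ B⁻¹ (exp(x_R B) - exp(x_L B)) β
    - P₀ B₀⁻¹ F_c c (x_R - x_L)`. -/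
theorem flux_integral_closed_form {n : ℕ}
    (lam₀ lam : Fin n → ℝ)
    (B₀ B : Matrix (Fin n) (Fin n) ℝ)
    (hB₀ : B₀ = Matrix.diagonal lam₀) (hB : B = Matrix.diagonal lam)
    (hB₀inv : IsUnit B₀.det) (hBinv : IsUnit B.det)
    (hdist : ∀ i j, lam₀ i ≠ lam j)
    (P₀ P Fn : Matrix (Fin n) (Fin n) ℝ) (hP₀ : IsUnit P₀.det)
    (α β c : Fin n → ℝ)
    (Q : ℝ → Fin n → ℝ)
    (hQ : ∀ ξ : ℝ, Q ξ = Fn.mulVec (P.mulVec ((exp (ξ • B)).mulVec β) + c))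
    (Fdag Fc Fddag : Matrix (Fin n) (Fin n) ℝ)
    (hFdag : Fdag = P₀⁻¹ * Fn * P)
    (hFc : Fc = P₀⁻¹ * Fn)
    (hFddag : ∀ i j, Fddag i j = Fdag i j / (lam j - lam₀ i))
    (xL xR : ℝ) (hx : xL ≤ xR)
    (Ψ : ℝ → Fin n → ℝ)
    (hΨ : ∀ x : ℝ, Ψ x = P₀.mulVec ((exp (x • B₀)).mulVec
      (α + ∫ ξ in xL..x, (exp ((-ξ) • B₀)).mulVec (P₀⁻¹.mulVec (Q ξ))))) :
    (∫ x in xL..xR, Ψ x)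
      = (P₀ * B₀⁻¹ * (exp (xR • B₀) - exp (xL • B₀))).mulVec
          (α - (exp ((-xL) • B₀) * Fddag * exp (xL • B)).mulVec β
            + (B₀⁻¹ * exp ((-xL) • B₀) * Fc).mulVec c)
        + (P₀ * Fddag * B⁻¹ * (exp (xR • B) - exp (xL • B))).mulVec β
        - (xR - xL) • (P₀ * B₀⁻¹ * Fc).mulVec c := by
  -- nonvanishing of eigenvalues
  have hl₀ : ∀ i, lam₀ i ≠ 0 := by
    intro i hi
    rw [hB₀, Matrix.det_diagonal, isUnit_iff_ne_zero] at hB₀inv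
    exact hB₀inv (Finset.prod_eq_zero (Finset.mem_univ i) hi)
  have hl : ∀ j, lam j ≠ 0 := by
    intro j hj
    rw [hB, Matrix.det_diagonal, isUnit_iff_ne_zero] at hBinv
    exact hBinv (Finset.prod_eq_zero (Finset.mem_univ j) hj)
  have hdiff : ∀ i j, lam j - lam₀ i ≠ 0 := fun i j h => hdist i j (by linarith [sub_eq_zero.mp h])
  have hFd : ∀ i j, Fddag i j * (lam j - lam₀ i) = Fdag i j := by
    intro i j; rw [hFddag]; exact div_mul_cancel₀ _ (hdiff i j)
  -- exponentials are diagonal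
  have hexp0 : ∀ x : ℝ, exp (x • B₀) = Matrix.diagonal (fun i => Real.exp (x * lam₀ i)) := by
    intro x; rw [hB₀]; exact exp_smul_diagonal _ _
  have hexp1 : ∀ x : ℝ, exp (x • B) = Matrix.diagonal (fun i => Real.exp (x * lam i)) := by
    intro x; rw [hB]; exact exp_smul_diagonal _ _
  set d : Fin n → ℝ := Fc.mulVec c with hd
  -- the inner integrand in coordinates
  set g : ℝ → Fin n → ℝ := fun ξ i =>
    (∑ j, Fdag i j * (Real.exp (-ξ * lam₀ i) * Real.exp (ξ * lam j)) * β j)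
      + Real.exp (-ξ * lam₀ i) * d i with hg
  have hQ' : ∀ ξ : ℝ, (exp ((-ξ) • B₀)).mulVec (P₀⁻¹.mulVec (Q ξ)) = g ξ := by
    intro ξ
    rw [hQ, hexp0, hexp1]
    have h1 : P₀⁻¹.mulVec (Fn.mulVec
        (P.mulVec ((Matrix.diagonal fun j => Real.exp (ξ * lam j)).mulVec β) + c))
        = Fdag.mulVec ((Matrix.diagonal fun j => Real.exp (ξ * lam j)).mulVec β)
          + Fc.mulVec c := by
      rw [hFdag, hFc]
      simp [Matrix.mulVec_add, Matrix.mulVec_mulVec, Matrix.mul_assoc]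
    rw [h1]
    have h2 : (Matrix.diagonal fun j => Real.exp (ξ * lam j)).mulVec β
        = fun j => Real.exp (ξ * lam j) * β j := by
      funext j; rw [Matrix.mulVec_diagonal]
    rw [h2]
    funext i
    simp only [hg, Matrix.mulVec_diagonal, Pi.add_apply, hd]
    rw [mul_add]
    congr 1
    simp only [Matrix.mulVec, dotProduct, Matrix.mulVec_diagonal, Finset.mul_sum]
    exact Finset.sum_congr rfl fun j _ => by ring
  -- antiderivative of g
  set H : ℝ → Fin n → ℝ := fun ξ i =>
    (∑ j, Fddag i j * Real.exp (ξ * (lam j - lam₀ i)) * β j)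
      - Real.exp (-ξ * lam₀ i) / lam₀ i * d i with hH
  have hHder : ∀ ξ : ℝ, HasDerivAt H (g ξ) ξ := by
    intro ξ
    rw [hasDerivAt_pi]
    intro i
    have h1 : ∀ j : Fin n,
        HasDerivAt (fun ξ => Fddag i j * Real.exp (ξ * (lam j - lam₀ i)) * β j)
          (Fdag i j * (Real.exp (-ξ * lam₀ i) * Real.exp (ξ * lam j)) * β j) ξ := by
      intro j
      have := (((hasDerivAt_id ξ).mul_const (lam j - lam₀ i)).exp.const_mul
        (Fddag i j)).mul_const (β j)
      convert this using 1
      case e'_4 => rfl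
      case e'_5 => rfl
      case e'_8 => rfl
      simp only [id_eq]
      rw [← hFd i j, ← Real.exp_add]
      ring_nf
    have h2 : HasDerivAt (fun ξ => Real.exp (-ξ * lam₀ i) / lam₀ i * d i)
        (-(Real.exp (-ξ * lam₀ i) * d i)) ξ := by
      have hin : HasDerivAt (fun ξ : ℝ => -ξ * lam₀ i) (-lam₀ i) ξ := by
        simpa using ((hasDerivAt_id ξ).neg.mul_const (lam₀ i))
      have := ((hin.exp.div_const (lam₀ i)).mul_const (d i))
      convert this using 1
      case e'_4 => rfl
      case e'_5 => rfl
      field_simp [hl₀ i]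
    have hsum : HasDerivAt (fun ξ => ∑ j, Fddag i j * Real.exp (ξ * (lam j - lam₀ i)) * β j)
        (∑ j, Fdag i j * (Real.exp (-ξ * lam₀ i) * Real.exp (ξ * lam j)) * β j) ξ :=
      HasDerivAt.fun_sum (fun j _ => h1 j)
    have := hsum.fun_sub h2
    simpa [hH, hg, sub_neg_eq_add] using this
  have hgcont : Continuous fun ξ => g ξ := by
    apply continuous_pi
    intro i
    apply Continuous.add
    · apply continuous_finset_sum
      intro j _
      fun_prop
    · fun_prop
  -- inner integral
  have hI : ∀ x : ℝ, (∫ ξ in xL..x, (exp ((-ξ) • B₀)).mulVec (P₀⁻¹.mulVec (Q ξ)))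
      = H x - H xL := by
    intro x
    rw [intervalIntegral.integral_congr (g := g) (fun ξ _ => hQ' ξ)]
    exact intervalIntegral.integral_eq_sub_of_hasDerivAt (fun ξ _ => hHder ξ)
      (hgcont.intervalIntegrable _ _)
  -- Ψ in coordinates
  set ψ : ℝ → Fin n → ℝ := fun x i =>
    Real.exp (x * lam₀ i) * (α i + (H x i - H xL i)) with hψ
  have hΨ' : ∀ x : ℝ, Ψ x = P₀.mulVec (ψ x) := by
    intro x
    rw [hΨ, hexp0, hI]
    apply congrArg
    funext i
    rw [Matrix.mulVec_diagonal]
    simp [hψ]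
  -- antiderivative of ψ
  set Φ : ℝ → Fin n → ℝ := fun x i =>
    (∑ j, Fddag i j * (Real.exp (x * lam j) / lam j) * β j)
      + Real.exp (x * lam₀ i) / lam₀ i * (α i - H xL i)
      - x * (d i / lam₀ i) with hΦ
  have hΦder : ∀ x : ℝ, HasDerivAt (fun x => P₀.mulVec (Φ x)) (P₀.mulVec (ψ x)) x := by
    intro x
    rw [hasDerivAt_pi]
    intro k
    simp only [Matrix.mulVec, dotProduct]
    apply HasDerivAt.fun_sum
    intro i _
    apply HasDerivAt.const_mul
    -- derivative of Φ x i in x is ψ x i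
    have h1 : ∀ j : Fin n,
        HasDerivAt (fun x => Fddag i j * (Real.exp (x * lam j) / lam j) * β j)
          (Fddag i j * Real.exp (x * lam j) * β j) x := by
      intro j
      have := ((((hasDerivAt_id x).mul_const (lam j)).exp.div_const (lam j)).const_mul
        (Fddag i j)).mul_const (β j)
      convert this using 1
      case e'_4 => rfl
      case e'_5 => rfl
      case e'_8 => rfl
      simp only [id_eq]
      field_simp [hl j]
    have h2 : HasDerivAt (fun x => Real.exp (x * lam₀ i) / lam₀ i * (α i - H xL i))
        (Real.exp (x * lam₀ i) * (α i - H xL i)) x := by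
      have := ((((hasDerivAt_id x).mul_const (lam₀ i)).exp.div_const (lam₀ i)).mul_const
        (α i - H xL i))
      convert this using 1
      case e'_4 => rfl
      case e'_5 => rfl
      case e'_8 => rfl
      simp only [id_eq]
      field_simp [hl₀ i]
    have h3 : HasDerivAt (fun x : ℝ => x * (d i / lam₀ i)) (d i / lam₀ i) x := by
      simpa using (hasDerivAt_id x).mul_const (d i / lam₀ i)
    have hsum : HasDerivAt (fun x => ∑ j, Fddag i j * (Real.exp (x * lam j) / lam j) * β j)
        (∑ j, Fddag i j * Real.exp (x * lam j) * β j) x :=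
      HasDerivAt.fun_sum (fun j _ => h1 j)
    have := (hsum.add h2).sub h3
    have key : ψ x i = (∑ j, Fddag i j * Real.exp (x * lam j) * β j)
        + Real.exp (x * lam₀ i) * (α i - H xL i) - d i / lam₀ i := by
      have e1 : ∀ j : Fin n, Real.exp (x * lam₀ i) * (Fddag i j * Real.exp (x * (lam j - lam₀ i)) * β j)
          = Fddag i j * Real.exp (x * lam j) * β j := by
        intro j
        have h : Real.exp (x * lam₀ i) * Real.exp (x * (lam j - lam₀ i)) = Real.exp (x * lam j) := by
          rw [← Real.exp_add]; congr 1; ring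
        calc Real.exp (x * lam₀ i) * (Fddag i j * Real.exp (x * (lam j - lam₀ i)) * β j)
            = (Real.exp (x * lam₀ i) * Real.exp (x * (lam j - lam₀ i))) * (Fddag i j * β j) := by
              ring
          _ = Fddag i j * Real.exp (x * lam j) * β j := by rw [h]; ring
      have e2 : Real.exp (x * lam₀ i) * (Real.exp (-x * lam₀ i) / lam₀ i * d i)
          = d i / lam₀ i := by
        have h : Real.exp (x * lam₀ i) * Real.exp (-x * lam₀ i) = 1 := by
          rw [← Real.exp_add]
          have : x * lam₀ i + -x * lam₀ i = 0 := by ring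
          rw [this, Real.exp_zero]
        calc Real.exp (x * lam₀ i) * (Real.exp (-x * lam₀ i) / lam₀ i * d i)
            = (Real.exp (x * lam₀ i) * Real.exp (-x * lam₀ i)) * (d i / lam₀ i) := by ring
          _ = d i / lam₀ i := by rw [h]; ring
      have hx1 : Real.exp (x * lam₀ i) * H x i
          = (∑ j, Fddag i j * Real.exp (x * lam j) * β j) - d i / lam₀ i := by
        simp only [hH]
        rw [mul_sub, Finset.mul_sum, Finset.sum_congr rfl (fun j _ => e1 j), e2]
      have hx2 : ψ x i = Real.exp (x * lam₀ i) * α i + Real.exp (x * lam₀ i) * H x i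
          - Real.exp (x * lam₀ i) * H xL i := by
        simp only [hψ]; ring
      rw [hx2, hx1]
      ring
    rw [key]
    simp only [hΦ]
    exact this
  have hψcont : Continuous fun x => P₀.mulVec (ψ x) := by
    apply continuous_pi
    intro k
    simp only [Matrix.mulVec, dotProduct]
    apply continuous_finset_sum
    intro i _
    apply Continuous.mul continuous_const
    apply Continuous.mul
    · fun_prop
    · apply Continuous.add continuous_const
      apply Continuous.sub _ continuous_const
      apply Continuous.sub
      · apply continuous_finset_sum
        intro j _
        fun_prop
      · fun_prop
  -- outer integral via FTC
  have houter : (∫ x in xL..xR, Ψ x) = P₀.mulVec (Φ xR) - P₀.mulVec (Φ xL) := by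
    rw [intervalIntegral.integral_congr (g := fun x => P₀.mulVec (ψ x)) (fun x _ => hΨ' x)]
    exact intervalIntegral.integral_eq_sub_of_hasDerivAt (fun x _ => hΦder x)
      (hψcont.intervalIntegrable _ _)
  rw [houter]
  -- final algebraic identity
  have hB₀i : B₀⁻¹ = Matrix.diagonal (fun i => (lam₀ i)⁻¹) := by
    rw [hB₀]; exact inv_diagonal' _ hl₀
  have hBi : B⁻¹ = Matrix.diagonal (fun j => (lam j)⁻¹) := by
    rw [hB]; exact inv_diagonal' _ hl
  rw [hexp0, hexp0, hexp0, hexp1, hexp1, hB₀i, hBi, Matrix.diagonal_sub, Matrix.diagonal_sub]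
  funext k
  simp only [Pi.add_apply, Pi.sub_apply, Pi.smul_apply, smul_eq_mul, Matrix.mulVec,
    dotProduct, Matrix.sub_apply, Matrix.diagonal_mul, Matrix.mul_diagonal,
    Matrix.mul_apply, Matrix.diagonal_apply, hΦ, mul_ite, ite_mul, mul_zero, zero_mul,
    Finset.sum_ite_eq, Finset.sum_ite_eq', Finset.mem_univ, if_true]
  rw [← Finset.sum_sub_distrib]
  have hT2 : ∑ x : Fin n, (∑ j : Fin n, P₀ k j * Fddag j x) * (lam x)⁻¹ *
        (Real.exp (xR * lam x) - Real.exp (xL * lam x)) * β x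
      = ∑ i : Fin n, P₀ k i * (∑ j : Fin n, Fddag i j * (lam j)⁻¹ *
        (Real.exp (xR * lam j) - Real.exp (xL * lam j)) * β j) := by
    simp only [Finset.sum_mul]
    rw [Finset.sum_comm]
    refine Finset.sum_congr rfl fun i _ => ?_
    rw [Finset.mul_sum]
    exact Finset.sum_congr rfl fun j _ => by ring
  have hT3 : ∑ x : Fin n, (∑ x1 : Fin n, P₀ k x1 * (lam₀ x1)⁻¹ * Fc x1 x) * c x
      = ∑ i : Fin n, P₀ k i * ((lam₀ i)⁻¹ * d i) := by
    simp only [Finset.sum_mul]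
    rw [Finset.sum_comm]
    refine Finset.sum_congr rfl fun i _ => ?_
    simp only [hd, Matrix.mulVec, dotProduct, Finset.mul_sum]
    exact Finset.sum_congr rfl fun j _ => by ring
  have hT1 : ∀ i : Fin n, (∑ x1 : Fin n, (lam₀ i)⁻¹ * Real.exp (-xL * lam₀ i) * Fc i x1 * c x1)
      = (lam₀ i)⁻¹ * Real.exp (-xL * lam₀ i) * d i := by
    intro i
    simp only [hd, Matrix.mulVec, dotProduct, Finset.mul_sum]
    exact Finset.sum_congr rfl fun j _ => by ring
  rw [hT2, hT3]
  simp only [hT1]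
  rw [Finset.mul_sum, ← Finset.sum_add_distrib, ← Finset.sum_sub_distrib]
  refine Finset.sum_congr rfl fun i _ => ?_
  simp only [hH]
  have hfuse : ∑ j : Fin n, Fddag i j * Real.exp (xL * (lam j - lam₀ i)) * β j
      = ∑ j : Fin n, Real.exp (-xL * lam₀ i) * Fddag i j * Real.exp (xL * lam j) * β j := by
    refine Finset.sum_congr rfl fun j _ => ?_
    have h : Real.exp (xL * (lam j - lam₀ i)) = Real.exp (-xL * lam₀ i) * Real.exp (xL * lam j) := by
      rw [← Real.exp_add]; congr 1; ring
    rw [h]; ring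
  rw [hfuse]
  have hsub : (∑ j : Fin n, Fddag i j * (Real.exp (xR * lam j) / lam j) * β j)
      - (∑ j : Fin n, Fddag i j * (Real.exp (xL * lam j) / lam j) * β j)
      = ∑ j : Fin n, Fddag i j * (lam j)⁻¹ * (Real.exp (xR * lam j) - Real.exp (xL * lam j)) * β j := by
    rw [← Finset.sum_sub_distrib]
    exact Finset.sum_congr rfl fun j _ => by ring
  linear_combination P₀ k i * hsub
end
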